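/- Let p be a prime and K a field complete with respect to a nonarchimedean absolute value extending the p-adic absolute value of ℚ_p, with ring of integers O_K = { x ∈ K : ‖x‖ ≤ 1 }. Let A be a K-Banach algebra and A₀ ⊆ A a bounded open subring which is topologically generated over O_K by a finite set, i.e. the closure of the O_K-subalgebra of A generated by some finite subset equals A₀. Let G be a profinite group acting continuously on A by K-algebra automorphisms such that g·A₀ = A₀ for all g ∈ G. Then for every continuous group homomorphism c : ℤ_p → G and every a ∈ A, the orbit map ℤ_p → A, z ↦ c(z)·a, is locally analytic. -/

import Mathlib

private lemma padicValNat_factorial_le' (p n : ℕ) [Fact p.Prime] :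
    padicValNat p n.factorial ≤ n := by
  have h := sub_one_mul_padicValNat_factorial (p := p) n
  have h2 : 1 ≤ p - 1 := Nat.le_sub_one_of_lt (Fact.out (p := p.Prime)).one_lt
  calc padicValNat p n.factorial ≤ (p-1) * padicValNat p n.factorial :=
        Nat.le_mul_of_pos_left _ (by omega)
  _ = n - (p.digits n).sum := h
  _ ≤ n := Nat.sub_le _ _

private lemma norm_inv_factorial_le' (p n : ℕ) [hp : Fact p.Prime] :
    ‖((n.factorial : ℚ_[p]))⁻¹‖ ≤ (p:ℝ)^n := by
  have hp1 : (1:ℝ) < p := by exact_mod_cast (Fact.out (p := p.Prime)).one_lt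
  have hne : ((n.factorial : ℚ_[p])) ≠ 0 := Nat.cast_ne_zero.2 n.factorial_ne_zero
  rw [norm_inv, Padic.norm_eq_zpow_neg_valuation hne, Padic.valuation_natCast, ← zpow_neg, neg_neg]
  calc ((p:ℝ)) ^ (padicValNat p n.factorial : ℤ) ≤ (p:ℝ) ^ (n : ℤ) := by
        apply zpow_le_zpow_right₀ hp1.le
        exact_mod_cast padicValNat_factorial_le' p n
  _ = (p:ℝ)^n := by norm_num

private lemma sum_descPochhammer_eval' (p : ℕ) [Fact p.Prime] (n T : ℕ) :
    ∑ j ∈ Finset.range (n+1),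
      (T : ℚ_[p])^j * (((descPochhammer ℤ n).coeff j : ℚ_[p]) * ((n.factorial : ℚ_[p]))⁻¹)
      = (T.choose n : ℚ_[p]) := by
  have hfac : ((n.factorial : ℚ_[p])) ≠ 0 := Nat.cast_ne_zero.2 n.factorial_ne_zero
  have hdeg : ((descPochhammer ℤ n).map (Int.castRingHom ℚ_[p])).natDegree < n + 1 := by
    refine Nat.lt_succ_of_le (le_trans Polynomial.natDegree_map_le ?_)
    rw [descPochhammer_natDegree]
  have heval := Polynomial.eval_eq_sum_range' hdeg ((T : ℚ_[p]))
  have hint : ((descPochhammer ℤ n).map (Int.castRingHom ℚ_[p])).eval (((T:ℤ) : ℤ) : ℚ_[p])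
      = (((descPochhammer ℤ n).eval (T:ℤ) : ℤ) : ℚ_[p]) :=
    Polynomial.eval_intCast_map _ _ _
  have hdesc : (descPochhammer ℤ n).eval ((T:ℕ) : ℤ) = ((T.descFactorial n : ℕ) : ℤ) :=
    descPochhammer_eval_eq_descFactorial ℤ T n
  have key : ∑ j ∈ Finset.range (n+1), ((descPochhammer ℤ n).coeff j : ℚ_[p]) * (T : ℚ_[p])^j
      = ((T.descFactorial n : ℕ) : ℚ_[p]) := by
    have : ((descPochhammer ℤ n).map (Int.castRingHom ℚ_[p])).eval ((T : ℚ_[p]))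
        = ∑ j ∈ Finset.range (n+1),
            ((descPochhammer ℤ n).coeff j : ℚ_[p]) * (T : ℚ_[p])^j := by
      rw [heval]
      exact Finset.sum_congr rfl fun j _ => by rw [Polynomial.coeff_map]; norm_num
    rw [← this]
    have hcast : ((T : ℤ) : ℚ_[p]) = (T : ℚ_[p]) := by push_cast; rfl
    rw [← hcast, hint, hdesc]
    push_cast
    ring
  calc ∑ j ∈ Finset.range (n+1),
      (T : ℚ_[p])^j * (((descPochhammer ℤ n).coeff j : ℚ_[p]) * ((n.factorial : ℚ_[p]))⁻¹)
      = (∑ j ∈ Finset.range (n+1),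
          ((descPochhammer ℤ n).coeff j : ℚ_[p]) * (T : ℚ_[p])^j) * ((n.factorial : ℚ_[p]))⁻¹ := by
        rw [Finset.sum_mul]; exact Finset.sum_congr rfl fun j _ => by ring
  _ = ((T.descFactorial n : ℕ) : ℚ_[p]) * ((n.factorial : ℚ_[p]))⁻¹ := by rw [key]
  _ = (T.choose n : ℚ_[p]) := by
      rw [Nat.descFactorial_eq_factorial_mul_choose]
      push_cast
      field_simp



/-!
Let `K` be a field complete with respect to a nonarchimedean absolute value extending the
`p`-adic absolute value of `ℚ_p`, with ring of integers `O_K = {x : ‖x‖ ≤ 1}`.  Let `A` be a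
`K`-Banach algebra, `A₀ ⊆ A` a bounded open subring topologically generated over `O_K` by a
finite set, and let a profinite group `G` act continuously on `A` by `K`-algebra
automorphisms preserving `A₀`.  Then for every continuous group homomorphism
`c : ℤ_p → G` and every `a ∈ A`, the orbit map `z ↦ c(z)·a` is locally analytic.
-/

open Pointwise in
theorem orbit_map_isLocallyAnalytic
    {p : ℕ} [Fact p.Prime]
    {K : Type*} [NormedField K] [CompleteSpace K] [IsUltrametricDist K]
    [Algebra ℚ_[p] K] (hK : ∀ x : ℚ_[p], ‖algebraMap ℚ_[p] K x‖ = ‖x‖)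
    {A : Type*} [NormedRing A] [NormedAlgebra K A] [CompleteSpace A]
    (A₀ : Subring A) (hA₀open : IsOpen (A₀ : Set A))
    (hA₀bdd : Bornology.IsBounded (A₀ : Set A))
    (hA₀gen : ∃ S : Finset A,
      closure ((Subring.closure
        ((algebraMap K A '' {x : K | ‖x‖ ≤ 1}) ∪ (S : Set A))) : Set A) = (A₀ : Set A))
    {G : Type*} [Group G] [TopologicalSpace G] [IsTopologicalGroup G]
    [CompactSpace G] [T2Space G] [TotallyDisconnectedSpace G]
    [MulSemiringAction G A]
    (hKlin : ∀ (g : G) (k : K) (a : A), g • (k • a) = k • (g • a))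
    (hcont : Continuous fun q : G × A => q.1 • q.2)
    (hstable : ∀ g : G, g • (A₀ : Set A) = (A₀ : Set A))
    (c : ℤ_[p] → G) (hc0 : c 0 = 1) (hcadd : ∀ x y : ℤ_[p], c (x + y) = c x * c y)
    (hccont : Continuous c) (a : A) :
    -- the orbit map `z ↦ c z • a` is locally analytic: around every `z₀` it is given on
    -- a coset `z₀ + p^m ℤ_p` by a convergent power series `∑' n, (z - z₀)^n • vₙ`
    ∀ z₀ : ℤ_[p], ∃ (m : ℕ) (v : ℕ → A), ∀ z : ℤ_[p], (p : ℤ_[p]) ^ m ∣ z - z₀ →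
      HasSum (fun n : ℕ =>
        (algebraMap ℚ_[p] K ((((z - z₀ : ℤ_[p]) : ℚ_[p])) ^ n)) • v n) (c z • a) := by
  intro z₀
  obtain ⟨S, hS⟩ := hA₀gen
  have hpprime : p.Prime := Fact.out
  have hp1R : (1:ℝ) < p := by exact_mod_cast hpprime.one_lt
  set q : ℝ := (p:ℝ)⁻¹ with hqdef
  have hq0 : (0:ℝ) < q := by positivity
  have hq1 : q < 1 := by rw [hqdef, inv_lt_one_iff₀]; right; exact hp1R
  set caf : ℚ_[p] →+* K := (algebraMap ℚ_[p] K : ℚ_[p] →+* K) with hcafdef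
  have hcafC : Continuous caf := (AddMonoidHomClass.isometry_of_norm caf hK).continuous
  set π : K := caf (p : ℚ_[p]) with hπdef
  have hπnorm : ‖π‖ = q := by rw [hπdef, hK]; exact Padic.norm_p
  have hπne : π ≠ 0 := by
    intro h
    rw [h, norm_zero] at hπnorm
    exact absurd hπnorm.symm (ne_of_gt hq0)
  obtain ⟨R, hR⟩ : ∃ R:ℝ, ∀ x ∈ (A₀:Set A), ‖x‖ ≤ R :=
    hA₀bdd.exists_norm_le
  have hR0 : 0 ≤ R := le_trans (norm_nonneg (0:A)) (hR 0 A₀.zero_mem)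
  have hA₀closed : IsClosed (A₀ : Set A) := by rw [← hS]; exact isClosed_closure
  -- the "divisibility" predicate : `Q k x` iff `x ∈ π^k • A₀`
  set Q : ℕ → A → Prop := fun k x => (π^k)⁻¹ • x ∈ (A₀ : Set A) with hQdef
  have hQ_iff : ∀ k x, Q k x ↔ ∃ y ∈ (A₀ : Set A), x = π^k • y := by
    intro k x
    constructor
    · intro h
      exact ⟨(π^k)⁻¹ • x, h, (smul_inv_smul₀ (pow_ne_zero _ hπne) x).symm⟩
    · rintro ⟨y, hy, rfl⟩
      simpa [hQdef, inv_smul_smul₀ (pow_ne_zero _ hπne)] using hy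
  have hQ0 : ∀ k, Q k 0 := by intro k; simp [hQdef, A₀.zero_mem]
  have hQsub : ∀ k x y, Q k x → Q k y → Q k (x - y) := by
    intro k x y hx hy
    have : (π^k)⁻¹ • (x - y) = (π^k)⁻¹ • x - (π^k)⁻¹ • y := smul_sub _ _ _
    simp only [hQdef] at hx hy ⊢
    simpa [this] using A₀.sub_mem hx hy
  have hQadd : ∀ k x y, Q k x → Q k y → Q k (x + y) := by
    intro k x y hx hy
    have : (π^k)⁻¹ • (x + y) = (π^k)⁻¹ • x + (π^k)⁻¹ • y := smul_add _ _ _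
    simp only [hQdef] at hx hy ⊢
    simpa [this] using A₀.add_mem hx hy
  have hQneg : ∀ k x, Q k x → Q k (-x) := by
    intro k x hx
    simp only [hQdef] at hx ⊢
    simpa [smul_neg] using A₀.neg_mem hx
  have hQmulR : ∀ k x y, Q k x → y ∈ (A₀ : Set A) → Q k (x * y) := by
    intro k x y hx hy
    simp only [hQdef] at hx ⊢
    simpa [smul_mul_assoc] using A₀.mul_mem hx hy
  have hQmulL : ∀ k x y, x ∈ (A₀ : Set A) → Q k y → Q k (x * y) := by
    intro k x y hx hy
    simp only [hQdef] at hy ⊢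
    simpa [mul_smul_comm] using A₀.mul_mem hx hy
  have hQsmul : ∀ j k x, Q k x → Q (j + k) (π^j • x) := by
    intro j k x hx
    simp only [hQdef] at hx ⊢
    have : (π^(j+k))⁻¹ • π^j • x = (π^k)⁻¹ • x := by
      rw [smul_smul]
      congr 1
      field_simp
      ring
    rwa [this]
  have hQnorm : ∀ k x, Q k x → ‖x‖ ≤ R * q^k := by
    intro k x hx
    obtain ⟨y, hy, rfl⟩ := (hQ_iff k x).mp hx
    rw [norm_smul, norm_pow, hπnorm]
    calc q^k * ‖y‖ ≤ q^k * R := by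
          exact mul_le_mul_of_nonneg_left (hR y hy) (by positivity)
    _ = R * q^k := mul_comm _ _
  have hQopen : ∀ k, IsOpen {x : A | Q k x} :=
    fun k => hA₀open.preimage (continuous_const_smul _)
  have hQclosed : ∀ k, IsClosed {x : A | Q k x} :=
    fun k => hA₀closed.preimage (continuous_const_smul _)
  have hQg : ∀ (g : G) (k : ℕ) (x : A), Q k x → Q k (g • x) := by
    intro g k x hx
    simp only [hQdef] at hx ⊢
    rw [show (π^k)⁻¹ • g • x = g • ((π^k)⁻¹ • x) from (hKlin g _ x).symm]
    rw [← hstable g]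
    exact Set.smul_mem_smul_set hx
  -- choose `m` such that `c z` moves generators by at most `π² A₀` for `p^m ∣ z`
  set U : Set G := {g : G | ∀ s ∈ S, Q 2 (g • s - s)} with hUdef
  have hUopen : IsOpen U := by
    have : U = ⋂ s ∈ S, {g : G | Q 2 (g • s - s)} := by
      ext g; simp [hUdef]
    rw [this]
    refine isOpen_biInter_finset fun s _ => ?_
    exact (hQopen 2).preimage
      ((hcont.comp (continuous_id.prodMk continuous_const)).sub continuous_const)
  have h1U : (1:G) ∈ U := by
    intro s _
    simpa using hQ0 2
  have hnhds : {z : ℤ_[p] | c z ∈ U} ∈ nhds (0 : ℤ_[p]) :=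
    (hUopen.preimage hccont).mem_nhds (by simp [hc0, h1U])
  obtain ⟨ε, hε0, hball⟩ := Metric.mem_nhds_iff.mp hnhds
  obtain ⟨m, hm⟩ : ∃ m:ℕ, q^m < ε := exists_pow_lt_of_lt_one hε0 hq1
  have hmem : ∀ z : ℤ_[p], (p:ℤ_[p])^m ∣ z → c z ∈ U := by
    intro z hz
    apply hball
    rw [Metric.mem_ball, dist_zero_right]
    calc ‖z‖ ≤ (p:ℝ)^(-(m:ℤ)) :=
          (PadicInt.norm_le_pow_iff_mem_span_pow z m).mpr (Ideal.mem_span_singleton.mpr hz)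
    _ = q^m := by rw [hqdef, zpow_neg, ← inv_zpow]; norm_num
    _ < ε := hm
  set γ : G := c ((p:ℤ_[p])^m) with hγdef
  have hγU : γ ∈ U := hmem _ dvd_rfl
  -- propagation to all of A₀
  have hA₀diff : ∀ x ∈ (A₀ : Set A), Q 2 (γ • x - x) := by
    have hBsub : (Subring.closure
        ((algebraMap K A '' {x : K | ‖x‖ ≤ 1}) ∪ (S : Set A)) : Set A) ⊆ (A₀ : Set A) :=
      hS ▸ subset_closure
    have hgenB : ∀ x ∈ (Subring.closure
        ((algebraMap K A '' {x : K | ‖x‖ ≤ 1}) ∪ (S : Set A)) : Set A), Q 2 (γ • x - x) := by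
      intro x hx
      induction hx using Subring.closure_induction with
      | mem x hx =>
        rcases hx with hx | hx
        · obtain ⟨k, _, rfl⟩ := hx
          have : γ • algebraMap K A k = algebraMap K A k := by
            rw [Algebra.algebraMap_eq_smul_one, hKlin, smul_one]
          rw [this, sub_self]
          exact hQ0 2
        · exact hγU x hx
      | zero => simpa [smul_zero] using hQ0 2
      | one =>
        rw [smul_one, sub_self]
        exact hQ0 2
      | add x y hx hy ihx ihy =>
        have h : γ • (x + y) - (x + y) = (γ • x - x) + (γ • y - y) := by
          rw [smul_add]; abel
        rw [h]
        exact hQadd 2 _ _ ihx ihy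
      | neg x hx ihx =>
        have h : γ • (-x) - (-x) = -(γ • x - x) := by rw [smul_neg]; abel
        rw [h]
        exact hQneg 2 _ ihx
      | mul x y hx hy ihx ihy =>
        have hxA : x ∈ (A₀ : Set A) := hBsub hx
        have hyA : y ∈ (A₀ : Set A) := hBsub hy
        have hγy : γ • y ∈ (A₀ : Set A) := by
          rw [← hstable γ]; exact Set.smul_mem_smul_set hyA
        have h : γ • (x * y) - x * y = (γ • x - x) * (γ • y) + x * (γ • y - y) := by
          rw [smul_mul']; noncomm_ring
        rw [h]
        exact hQadd 2 _ _ (hQmulR 2 _ _ ihx hγy) (hQmulL 2 _ _ hxA ihy)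
    intro x hx
    have hclosed : IsClosed {y : A | Q 2 (γ • y - y)} :=
      (hQclosed 2).preimage
        ((hcont.comp (continuous_const.prodMk continuous_id)).sub continuous_id)
    have hsub : (A₀ : Set A) ⊆ {y | Q 2 (γ • y - y)} :=
      hS ▸ closure_minimal hgenB hclosed
    exact hsub hx
  -- normalize `a` into `A₀`
  obtain ⟨ε₀, hε₀, hball₀⟩ := Metric.mem_nhds_iff.mp (hA₀open.mem_nhds A₀.zero_mem)
  obtain ⟨k₀, hk₀⟩ : ∃ k₀:ℕ, q^k₀ * ‖a‖ < ε₀ := by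
    have hpos : (0:ℝ) < ε₀ / (‖a‖ + 1) := by positivity
    obtain ⟨k₀, hk₀⟩ := exists_pow_lt_of_lt_one hpos hq1
    refine ⟨k₀, ?_⟩
    have h1 : q^k₀ * ‖a‖ ≤ q^k₀ * (‖a‖ + 1) := by
      have := norm_nonneg a
      nlinarith [pow_pos hq0 k₀]
    have h2 : q^k₀ * (‖a‖ + 1) < (ε₀ / (‖a‖ + 1)) * (‖a‖ + 1) := by
      have hna : (0:ℝ) < ‖a‖ + 1 := by positivity
      exact mul_lt_mul_of_pos_right hk₀ hna
    have h3 : (ε₀ / (‖a‖ + 1)) * (‖a‖ + 1) = ε₀ := by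
      field_simp
    linarith
  set a' : A := π^k₀ • a with ha'def
  have ha'A₀ : a' ∈ (A₀ : Set A) := by
    apply hball₀
    rw [Metric.mem_ball, dist_zero_right, ha'def, norm_smul, norm_pow, hπnorm]
    exact hk₀
  -- the operator Δ = ρ - 1
  have hγcont : Continuous fun x : A => γ • x :=
    hcont.comp (continuous_const.prodMk continuous_id)
  set ρ : A →L[K] A :=
    ⟨⟨⟨fun x => γ • x, fun x y => smul_add γ x y⟩, fun k x => hKlin γ k x⟩, hγcont⟩ with hρdef
  have hρapp : ∀ x : A, ρ x = γ • x := fun x => rfl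
  set Δ : A →L[K] A := ρ - 1 with hΔdef
  have hΔapp : ∀ x : A, Δ x = γ • x - x := by
    intro x
    rw [hΔdef, ContinuousLinearMap.sub_apply, ContinuousLinearMap.one_apply, hρapp]
  set d : ℕ → A := fun n => (Δ^n) a' with hddef
  have hd0 : d 0 = a' := by simp [hddef]
  have hdsucc : ∀ n, d (n+1) = γ • d n - d n := by
    intro n
    simp only [hddef, pow_succ']
    rw [ContinuousLinearMap.mul_apply, hΔapp]
  have hdQ : ∀ n, Q (2*n) (d n) := by
    intro n
    induction n with
    | zero =>
      simp only [hd0, Nat.mul_zero]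
      simp only [hQdef, pow_zero, inv_one, one_smul]
      exact ha'A₀
    | succ n ih =>
      obtain ⟨y, hy, hdy⟩ := (hQ_iff _ _).mp ih
      have h1 : γ • d n - d n = π^(2*n) • (γ • y - y) := by
        rw [hdy, hKlin, smul_sub]
      have h2 := hQsmul (2*n) 2 (γ • y - y) (hA₀diff y hy)
      rw [hdsucc, h1, show 2*(n+1) = 2*n + 2 from by ring]
      exact h2
  have hd_norm : ∀ n, ‖d n‖ ≤ R * q^(2*n) := fun n => hQnorm _ _ (hdQ n)
  -- binomial identity
  have hρpow : ∀ (T : ℕ) (x : A), (ρ^T) x = γ^T • x := by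
    intro T
    induction T with
    | zero => intro x; simp [pow_zero]
    | succ T ih =>
      intro x
      rw [pow_succ, ContinuousLinearMap.mul_apply, hρapp, ih, pow_succ, mul_smul]
  have hbinom : ∀ T : ℕ, γ^T • a' = ∑ n ∈ Finset.range (T+1), (T.choose n) • d n := by
    intro T
    have hcomm : Commute Δ (1 : A →L[K] A) := Commute.one_right Δ
    have h1 : ρ = Δ + 1 := by rw [hΔdef, sub_add_cancel]
    have h2 : ρ^T = ∑ nk ∈ Finset.HasAntidiagonal.antidiagonal T, T.choose nk.1 • (Δ^nk.1 * 1^nk.2) := by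
      rw [h1, hcomm.add_pow']
    have h3 : (ρ^T) a' = ∑ nk ∈ Finset.HasAntidiagonal.antidiagonal T, T.choose nk.1 • ((Δ^nk.1) a') := by
      rw [h2, ContinuousLinearMap.sum_apply]
      exact Finset.sum_congr rfl fun nk _ => by
        rw [one_pow, mul_one, ContinuousLinearMap.smul_apply]
    rw [← hρpow T a', h3, Finset.Nat.sum_antidiagonal_eq_sum_range_succ_mk]
  -- the one-parameter subgroup powers
  have hpowc : ∀ T : ℕ, c ((p:ℤ_[p])^m * (T:ℤ_[p])) = γ^T := by
    intro T
    induction T with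
    | zero => simp [hc0]
    | succ T ih =>
      have : (p:ℤ_[p])^m * ((T:ℕ)+1 : ℤ_[p]) = (p:ℤ_[p])^m * (T:ℤ_[p]) + (p:ℤ_[p])^m := by
        ring
      rw [Nat.cast_succ, this, hcadd, ih, hγdef, pow_succ]
  -- the power series coefficients
  set aq : ℕ → ℕ → ℚ_[p] :=
    fun n j => ((descPochhammer ℤ n).coeff j : ℚ_[p]) * ((n.factorial : ℚ_[p]))⁻¹ with haqdef
  have haq_zero : ∀ n j, n < j → aq n j = 0 := by
    intro n j h
    have : (descPochhammer ℤ n).coeff j = 0 := by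
      apply Polynomial.coeff_eq_zero_of_natDegree_lt
      rwa [descPochhammer_natDegree]
    simp [haqdef, this]
  have haq_norm : ∀ n j, ‖aq n j‖ ≤ (p:ℝ)^n := by
    intro n j
    rw [haqdef]
    calc ‖((descPochhammer ℤ n).coeff j : ℚ_[p]) * ((n.factorial : ℚ_[p]))⁻¹‖
        = ‖((descPochhammer ℤ n).coeff j : ℚ_[p])‖ * ‖((n.factorial : ℚ_[p]))⁻¹‖ := norm_mul _ _
    _ ≤ 1 * (p:ℝ)^n := by
        apply mul_le_mul (Padic.norm_int_le_one _) (norm_inv_factorial_le' p n)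
          (norm_nonneg _) zero_le_one
    _ = (p:ℝ)^n := one_mul _
  -- the real comparison family
  set F : ℕ×ℕ → ℝ := fun nj => if nj.2 ≤ nj.1 then R * q^nj.1 else 0 with hFdef
  have hF0 : ∀ nj, 0 ≤ F nj := by
    intro nj
    rw [hFdef]
    dsimp only
    split
    · positivity
    · exact le_refl 0
  have hFrow : ∀ n, ∑' j, F (n, j) = R * q^n + (n:ℝ) * (R * q^n) := by
    intro n
    rw [tsum_eq_sum (s := Finset.range (n+1)) (by
      intro j hj
      simp only [Finset.mem_range, not_lt] at hj
      simp only [hFdef]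
      rw [if_neg (by omega)])]
    have : ∀ j ∈ Finset.range (n+1), F (n, j) = R * q^n := by
      intro j hj
      simp only [Finset.mem_range] at hj
      simp only [hFdef]
      rw [if_pos (by omega)]
    rw [Finset.sum_congr rfl this, Finset.sum_const, Finset.card_range, nsmul_eq_mul]
    push_cast
    ring
  have hFsumm : Summable F := by
    rw [summable_prod_of_nonneg hF0]
    constructor
    · intro n
      apply summable_of_ne_finset_zero (s := Finset.range (n+1))
      intro j hj
      simp only [Finset.mem_range, not_lt] at hj
      simp only [hFdef]
      rw [if_neg (by omega)]
    · apply Summable.congr _ (fun n => (hFrow n).symm)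
      have hgeom : Summable fun n : ℕ => R * q^n :=
        (summable_geometric_of_lt_one hq0.le hq1).mul_left R
      have hngeom : Summable fun n : ℕ => (n:ℝ) * (R * q^n) := by
        have h := summable_pow_mul_geometric_of_norm_lt_one (R := ℝ) 1
          (r := q) (by rw [Real.norm_eq_abs, abs_of_pos hq0]; exact hq1)
        have h2 := h.mul_left R
        apply Summable.congr h2
        intro n
        ring
      exact hgeom.add hngeom
  -- bound for the main terms
  have hterm_norm : ∀ (x : ℚ_[p]) (n j : ℕ), ‖x‖ ≤ 1 →
      ‖caf (x * aq n j) • d n‖ ≤ F (n, j) := by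
    intro x n j hx
    by_cases h : j ≤ n
    · calc ‖caf (x * aq n j) • d n‖ = ‖x * aq n j‖ * ‖d n‖ := by
            rw [norm_smul, hK]
      _ ≤ (1 * (p:ℝ)^n) * (R * q^(2*n)) := by
          apply mul_le_mul _ (hd_norm n) (norm_nonneg _) (by positivity)
          rw [norm_mul]
          exact mul_le_mul hx (haq_norm n j) (norm_nonneg _) zero_le_one
      _ = R * q^n := by
          have hpq : (p:ℝ) * q = 1 := by
            rw [hqdef]
            field_simp
          have : ((p:ℝ)^n) * q^(2*n) = q^n := by
            rw [two_mul, pow_add, ← mul_assoc, ← mul_pow, hpq, one_pow, one_mul]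
          rw [one_mul, ← mul_assoc, mul_comm ((p:ℝ)^n) R, mul_assoc, this]
      _ = F (n, j) := by simp only [hFdef]; rw [if_pos h]
    · rw [haq_zero n j (by omega), mul_zero, map_zero, zero_smul, norm_zero]
      exact hF0 _
  have hterm1 : ∀ n j, ‖caf (aq n j) • d n‖ ≤ F (n, j) := by
    intro n j
    have := hterm_norm 1 n j (by simp)
    rwa [one_mul] at this
  have hcol_summF : ∀ j, Summable fun n => F (n, j) :=
    fun j => hFsumm.comp_injective (i := fun n => (n, j))
      (fun n₁ n₂ h => (Prod.ext_iff.1 h).1)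
  -- the coefficient vectors
  set v : ℕ → A := fun j => ∑' n, caf (aq n j) • d n with hvdef
  have hinner_summ : ∀ j, Summable fun n => caf (aq n j) • d n := by
    intro j
    exact Summable.of_norm_bounded (hcol_summF j) (hterm1 · j)
  have hnorm_summ : ∀ j, Summable fun n => ‖caf (aq n j) • d n‖ := by
    intro j
    exact Summable.of_nonneg_of_le (fun n => norm_nonneg _) (hterm1 · j) (hcol_summF j)
  have hv_norm : ∀ j, ‖v j‖ ≤ ∑' n, F (n, j) := by
    intro j
    calc ‖v j‖ ≤ ∑' n, ‖caf (aq n j) • d n‖ := norm_tsum_le_tsum_norm (hnorm_summ j)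
    _ ≤ ∑' n, F (n, j) := Summable.tsum_le_tsum (hterm1 · j) (hnorm_summ j) (hcol_summF j)
  have hM_summ : Summable fun j => ∑' n, F (n, j) := by
    have h1 : Summable fun jn : ℕ×ℕ => F (jn.2, jn.1) := by
      have := hFsumm.prod_symm
      exact this
    have h2 : ∀ jn : ℕ×ℕ, 0 ≤ F (jn.2, jn.1) := fun jn => hF0 _
    exact ((summable_prod_of_nonneg h2).mp h1).2
  have hM_nonneg : ∀ j, (0:ℝ) ≤ ∑' n, F (n, j) := fun j => tsum_nonneg (fun n => hF0 _)
  -- norms of padic integers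
  have hZnorm : ∀ (t : ℤ_[p]) (j : ℕ), ‖((t:ℚ_[p]))^j‖ ≤ 1 := by
    intro t j
    rw [norm_pow]
    exact pow_le_one₀ (norm_nonneg _) t.2
  have hguysum : ∀ t : ℤ_[p], Summable fun j => caf ((t:ℚ_[p])^j) • v j := by
    intro t
    apply Summable.of_norm_bounded hM_summ
    intro j
    rw [norm_smul, hK]
    calc ‖((t:ℚ_[p]))^j‖ * ‖v j‖ ≤ 1 * (∑' n, F (n, j)) :=
          mul_le_mul (hZnorm t j) (hv_norm j) (norm_nonneg _) zero_le_one
    _ = ∑' n, F (n, j) := one_mul _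
  -- continuity of both sides
  have hcoeC : Continuous fun t : ℤ_[p] => (t : ℚ_[p]) := continuous_subtype_val
  have hGcont : Continuous fun t : ℤ_[p] => ∑' j, caf ((t:ℚ_[p])^j) • v j := by
    apply continuous_tsum (u := fun j => ∑' n, F (n, j))
    · intro j
      exact ((hcafC.comp (hcoeC.pow j)).smul continuous_const)
    · exact hM_summ
    · intro j t
      rw [norm_smul, hK]
      calc ‖((t:ℚ_[p]))^j‖ * ‖v j‖ ≤ 1 * (∑' n, F (n, j)) :=
            mul_le_mul (hZnorm t j) (hv_norm j) (norm_nonneg _) zero_le_one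
      _ = ∑' n, F (n, j) := one_mul _
  have hRHScont : Continuous fun t : ℤ_[p] => c ((p:ℤ_[p])^m * t) • a' :=
    hcont.comp ((hccont.comp (continuous_const.mul continuous_id)).prodMk continuous_const)
  -- the key identity at natural numbers
  have hnat : ∀ T : ℕ, (∑' j, caf ((((T:ℤ_[p]):ℚ_[p]))^j) • v j)
      = c ((p:ℤ_[p])^m * ((T:ℕ):ℤ_[p])) • a' := by
    intro T
    set Tq : ℚ_[p] := ((T:ℤ_[p]):ℚ_[p]) with hTqdef
    have hTq1 : ∀ j, ‖Tq^j‖ ≤ 1 := hZnorm _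
    have hTqcast : Tq = (T : ℚ_[p]) := by rw [hTqdef]; push_cast; rfl
    set f' : ℕ → ℕ → A := fun n j => caf (Tq^j * aq n j) • d n with hf'def
    have huncurry : Summable (Function.uncurry f') := by
      apply Summable.of_norm_bounded hFsumm
      intro nj
      exact hterm_norm (Tq^nj.2) nj.1 nj.2 (hTq1 nj.2)
    have h₁ : ∀ n, Summable (f' n) := by
      intro n
      apply summable_of_ne_finset_zero (s := Finset.range (n+1))
      intro j hj
      simp only [Finset.mem_range, not_lt] at hj
      simp only [hf'def]
      rw [haq_zero n j (by omega), mul_zero, map_zero, zero_smul]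
    have h₂ : ∀ j, Summable fun n => f' n j := by
      intro j
      apply Summable.of_norm_bounded (hcol_summF j)
      intro n
      exact hterm_norm (Tq^j) n j (hTq1 j)
    have hstep1 : (∑' j, caf (Tq^j) • v j) = ∑' j, ∑' n, f' n j := by
      refine tsum_congr fun j => ?_
      rw [hvdef]
      rw [← ((hinner_summ j).hasSum.const_smul (caf (Tq^j))).tsum_eq]
      refine tsum_congr fun n => ?_
      rw [smul_smul, ← map_mul]
    have hstep2 : (∑' j, ∑' n, f' n j) = ∑' n, ∑' j, f' n j := Summable.tsum_comm' huncurry h₁ h₂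
    have hstep3 : ∀ n, (∑' j, f' n j) = caf ((T.choose n : ℚ_[p])) • d n := by
      intro n
      rw [tsum_eq_sum (s := Finset.range (n+1)) (by
        intro j hj
        simp only [Finset.mem_range, not_lt] at hj
        simp only [hf'def]
        rw [haq_zero n j (by omega), mul_zero, map_zero, zero_smul])]
      simp only [hf'def]
      rw [← Finset.sum_smul, ← map_sum]
      congr 2
      rw [hTqcast, haqdef]
      exact sum_descPochhammer_eval' p n T
    have hstep4 : (∑' n, caf ((T.choose n : ℚ_[p])) • d n)
        = ∑ n ∈ Finset.range (T+1), (T.choose n) • d n := by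
      rw [tsum_eq_sum (s := Finset.range (T+1)) (by
        intro n hn
        simp only [Finset.mem_range, not_lt] at hn
        rw [Nat.choose_eq_zero_of_lt (by omega), Nat.cast_zero, map_zero, zero_smul])]
      refine Finset.sum_congr rfl fun n _ => ?_
      rw [map_natCast caf, Nat.cast_smul_eq_nsmul]
    rw [hstep1, hstep2, tsum_congr hstep3, hstep4, ← hbinom, hpowc]
  -- conclusion by density
  have heq : (fun t : ℤ_[p] => ∑' j, caf ((t:ℚ_[p])^j) • v j)
      = fun t : ℤ_[p] => c ((p:ℤ_[p])^m * t) • a' :=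
    DenseRange.equalizer PadicInt.denseRange_natCast hGcont hRHScont (funext hnat)
  -- final assembly
  refine ⟨m, fun n => (π ^ k₀)⁻¹ • (caf ((((p:ℚ_[p])^m)⁻¹)^n) • (c z₀ • v n)), ?_⟩
  intro z hz
  obtain ⟨t, ht⟩ := hz
  have hbase : HasSum (fun j => caf ((t:ℚ_[p])^j) • v j) (c ((p:ℤ_[p])^m * t) • a') := by
    have h := (hguysum t).hasSum
    rwa [show (∑' j, caf ((t:ℚ_[p])^j) • v j) = c ((p:ℤ_[p])^m * t) • a' from congrFun heq t]
      at h
  have hstep : HasSum (fun j => (π ^ k₀)⁻¹ • (caf ((t:ℚ_[p])^j) • v j))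
      ((π^k₀)⁻¹ • (c ((p:ℤ_[p])^m * t) • a')) := hbase.const_smul _
  have hval : (π^k₀)⁻¹ • (c ((p:ℤ_[p])^m * t) • a') = c ((p:ℤ_[p])^m * t) • a := by
    rw [ha'def, hKlin, inv_smul_smul₀ (pow_ne_zero _ hπne)]
  rw [hval] at hstep
  have hφcont : Continuous fun x : A => c z₀ • x :=
    hcont.comp (continuous_const.prodMk continuous_id)
  have hmap := hstep.map (DistribMulAction.toAddMonoidHom A (c z₀)) hφcont
  simp only [DistribMulAction.toAddMonoidHom_apply] at hmap
  have hvalue : c z₀ • (c ((p:ℤ_[p])^m * t) • a) = c z • a := by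
    rw [smul_smul, ← hcadd, show z₀ + (p:ℤ_[p])^m * t = z from by rw [← ht]; ring]
  rw [hvalue] at hmap
  have hpm_ne : ((p:ℚ_[p])^m) ≠ 0 := by
    apply pow_ne_zero
    exact_mod_cast hpprime.ne_zero
  have hfun : (fun j => (algebraMap ℚ_[p] K (((z - z₀ : ℤ_[p]):ℚ_[p])^j)) •
        ((π ^ k₀)⁻¹ • (caf ((((p:ℚ_[p])^m)⁻¹)^j) • (c z₀ • v j))))
      = fun j => c z₀ • ((π^k₀)⁻¹ • (caf ((t:ℚ_[p])^j) • v j)) := by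
    funext j
    have hcast : ((z - z₀ : ℤ_[p]) : ℚ_[p]) = (p:ℚ_[p])^m * (t : ℚ_[p]) := by
      rw [ht]; push_cast; ring
    have hpowt : ((t:ℚ_[p]))^j = (((z - z₀ : ℤ_[p]):ℚ_[p])^j) * ((((p:ℚ_[p])^m)⁻¹)^j) := by
      rw [hcast, mul_pow, inv_pow]
      field_simp
    rw [hKlin, hKlin]
    simp only [smul_smul]
    congr 1
    rw [hpowt, map_mul]
    ring
  rw [hfun]
  exact hmap
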